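/- Let m ≥ 1 and let c : [0,1] → ℝ^m and r : [0,1] → ℝ be differentiable functions satisfying ‖c'(t)‖ < r'(t) for every t ∈ [0,1]. Then for all 0 ≤ τ < t ≤ 1, the closed ball of centre c(τ) and radius r(τ) is contained in the open ball of centre c(t) and radius r(t). In particular, the spheres {z ∈ ℝ^m : ‖z - c(t)‖ = r(t)}, t ∈ [0,1], are pairwise disjoint, and they form an expanding family of nested spheres. -/

import Mathlib

/-!
STATEMENT 3: If `c : [0,1] → ℝ^m` and `r : [0,1] → ℝ` are differentiable with
`‖c'(t)‖ < r'(t)` for all `t ∈ [0,1]`, then for `0 ≤ τ < t ≤ 1` the closed ball of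
centre `c(τ)` and radius `r(τ)` is contained in the open ball of centre `c(t)` and
radius `r(t)`; in particular the spheres `{‖z - c(t)‖ = r(t)}`, `t ∈ [0,1]`, are
pairwise disjoint and form an expanding nested family.
-/

noncomputable section

open Set Metric Filter Topology

theorem expanding_nested_spheres (m : ℕ) (hm : 1 ≤ m)
    (c : ℝ → EuclideanSpace ℝ (Fin m)) (r : ℝ → ℝ)
    (c' : ℝ → EuclideanSpace ℝ (Fin m)) (r' : ℝ → ℝ)
    (hc : ∀ t ∈ Icc (0:ℝ) 1, HasDerivAt c (c' t) t)
    (hr : ∀ t ∈ Icc (0:ℝ) 1, HasDerivAt r (r' t) t)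
    (hlt : ∀ t ∈ Icc (0:ℝ) 1, ‖c' t‖ < r' t) :
    (∀ τ ∈ Icc (0:ℝ) 1, ∀ t ∈ Icc (0:ℝ) 1, τ < t →
      Metric.closedBall (c τ) (r τ) ⊆ Metric.ball (c t) (r t)) ∧
    (∀ τ ∈ Icc (0:ℝ) 1, ∀ t ∈ Icc (0:ℝ) 1, τ ≠ t →
      Metric.sphere (c τ) (r τ) ∩ Metric.sphere (c t) (r t) = ∅) := by
  -- Non-strict estimate on any subinterval of [0,1]
  have weak : ∀ a ∈ Icc (0:ℝ) 1, ∀ b ∈ Icc (0:ℝ) 1, a ≤ b →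
      ‖c b - c a‖ ≤ r b - r a := by
    intro a ha b hb hab
    have hsub : Icc a b ⊆ Icc (0:ℝ) 1 := Icc_subset_Icc ha.1 hb.2
    have hf : ContinuousOn (fun s => c s - c a) (Icc a b) := fun x hx =>
      (((hc x (hsub hx)).continuousAt).sub continuousAt_const).continuousWithinAt
    have hf' : ∀ x ∈ Ico a b, HasDerivWithinAt (fun s => c s - c a) (c' x) (Ici x) x := by
      intro x hx
      simpa using ((hc x (hsub (Ico_subset_Icc_self hx))).sub_const (c a)).hasDerivWithinAt
    have hB : ContinuousOn (fun s => r s - r a) (Icc a b) := fun x hx =>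
      (((hr x (hsub hx)).continuousAt).sub continuousAt_const).continuousWithinAt
    have hB' : ∀ x ∈ Ico a b, HasDerivWithinAt (fun s => r s - r a) (r' x) (Ici x) x := by
      intro x hx
      simpa using ((hr x (hsub (Ico_subset_Icc_self hx))).sub_const (r a)).hasDerivWithinAt
    have bound : ∀ x ∈ Ico a b, ‖c' x‖ ≤ r' x := fun x hx =>
      (hlt x (hsub (Ico_subset_Icc_self hx))).le
    have := image_norm_le_of_norm_deriv_right_le_deriv_boundary' hf hf'
      (by simp) hB hB' bound (right_mem_Icc.2 hab)
    simpa using this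
  -- Strict estimate
  have key : ∀ τ ∈ Icc (0:ℝ) 1, ∀ t ∈ Icc (0:ℝ) 1, τ < t →
      ‖c t - c τ‖ + r τ < r t := by
    intro τ hτ t ht hτt
    set ε : ℝ := (r' τ - ‖c' τ‖) / 2 with hε
    have hεpos : 0 < ε := by
      have := hlt τ hτ; linarith
    -- slope convergence
    have hcs : Tendsto (slope c τ) (𝓝[≠] τ) (𝓝 (c' τ)) :=
      hasDerivAt_iff_tendsto_slope.1 (hc τ hτ)
    have hrs : Tendsto (slope r τ) (𝓝[≠] τ) (𝓝 (r' τ)) :=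
      hasDerivAt_iff_tendsto_slope.1 (hr τ hτ)
    have hcs' : ∀ᶠ s in 𝓝[≠] τ, ‖slope c τ s‖ < ‖c' τ‖ + ε :=
      (hcs.norm.eventually (eventually_lt_nhds (by linarith : ‖c' τ‖ < ‖c' τ‖ + ε)))
    have hrs' : ∀ᶠ s in 𝓝[≠] τ, r' τ - ε < slope r τ s :=
      hrs.eventually (eventually_gt_nhds (by linarith : r' τ - ε < r' τ))
    have hmem : Ioc τ t ∈ 𝓝[>] τ := Ioc_mem_nhdsGT_of_mem ⟨le_refl τ, hτt⟩
    have hsub2 : 𝓝[>] τ ≤ 𝓝[≠] τ := nhdsWithin_mono τ (fun x hx => ne_of_gt hx)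
    obtain ⟨s, hs1, hs2, hs3⟩ :=
      ((hcs'.filter_mono hsub2).and ((hrs'.filter_mono hsub2).and hmem)).exists
    obtain ⟨hsτ, hst⟩ := hs3
    have hspos : (0:ℝ) < s - τ := by linarith
    have hs01 : s ∈ Icc (0:ℝ) 1 := ⟨le_trans hτ.1 hsτ.le, le_trans hst ht.2⟩
    -- strict gain on [τ, s]
    have h1 : ‖c s - c τ‖ < r s - r τ := by
      have e1 : ‖c s - c τ‖ = (s - τ) * ‖slope c τ s‖ := by
        rw [slope_def_module, norm_smul]
        field_simp
        rw [norm_div, norm_one, Real.norm_eq_abs, abs_of_pos hspos, mul_assoc, mul_one_div_cancel hspos.ne', mul_one]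
      have e2 : r s - r τ = (s - τ) * slope r τ s := by
        rw [slope_def_field]
        field_simp
      rw [e1, e2]
      have heq : ‖c' τ‖ + ε = r' τ - ε := by rw [hε]; ring
      rw [heq] at hs1
      exact (mul_lt_mul_iff_right₀ hspos).2 (lt_trans hs1 hs2)
    have h2 : ‖c t - c s‖ ≤ r t - r s := weak s hs01 t ht hst
    calc ‖c t - c τ‖ + r τ ≤ ‖c t - c s‖ + ‖c s - c τ‖ + r τ := by
          have := norm_sub_le_norm_sub_add_norm_sub (c t) (c s) (c τ)
          linarith
      _ < (r t - r s) + (r s - r τ) + r τ := by linarith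
      _ = r t := by ring
  have incl : ∀ τ ∈ Icc (0:ℝ) 1, ∀ t ∈ Icc (0:ℝ) 1, τ < t →
      Metric.closedBall (c τ) (r τ) ⊆ Metric.ball (c t) (r t) := by
    intro τ hτ t ht hτt x hx
    rw [mem_closedBall] at hx
    rw [mem_ball]
    have h := key τ hτ t ht hτt
    calc dist x (c t) ≤ dist x (c τ) + dist (c τ) (c t) := dist_triangle _ _ _
      _ ≤ r τ + ‖c t - c τ‖ := by
          have hd : dist (c τ) (c t) = ‖c t - c τ‖ := dist_eq_norm' _ _
          linarith
      _ < r t := by linarith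
  refine ⟨incl, ?_⟩
  intro τ hτ t ht hne
  rcases lt_or_gt_of_ne hne with h | h
  · ext x
    simp only [mem_inter_iff, mem_sphere, mem_empty_iff_false, iff_false, not_and]
    intro h1 h2
    have : x ∈ Metric.ball (c t) (r t) :=
      incl τ hτ t ht h (by rw [mem_closedBall]; exact h1.le)
    rw [mem_ball] at this; exact absurd h2 (ne_of_lt this)
  · ext x
    simp only [mem_inter_iff, mem_sphere, mem_empty_iff_false, iff_false, not_and]
    intro h1 h2
    have : x ∈ Metric.ball (c τ) (r τ) :=
      incl t ht τ hτ h (by rw [mem_closedBall]; exact h2.le)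
    rw [mem_ball] at this; exact absurd h1 (ne_of_lt this)
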